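/- Let G be a graph with an escape path from v_1 to v_n. Then flip_P induces an injection from the family of independent sets of G containing v_1 into the family of independent sets of G containing v_n. -/

import Mathlib

open scoped Classical

variable {V : Type*}

/-- `P = p 1, p 2, …, p n` is an escape path in `G` (from `p 1` to `p n`):
a path in `G` whose last vertex `p n` has degree 1 and whose vertices
`p i` for `2 ≤ i ≤ n - 2` have degree 2. -/
def IsEscapePath [Fintype V] (G : SimpleGraph V) (n : ℕ) (p : ℕ → V) : Prop :=
  1 ≤ n ∧ Set.InjOn p (Set.Icc 1 n) ∧
  (∀ i, 1 ≤ i → i < n → G.Adj (p i) (p (i + 1))) ∧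
  G.degree (p n) = 1 ∧
  ∀ i, 2 ≤ i → i ≤ n - 2 → G.degree (p i) = 2

/-- The flip of the path `p 1, …, p n`: it maps `p i` to `p (n + 1 - i)` and
fixes every vertex outside the path. -/
noncomputable def flipP (n : ℕ) (p : ℕ → V) : V → V := fun x =>
  if h : ∃ i, 1 ≤ i ∧ i ≤ n ∧ p i = x then p (n + 1 - h.choose) else x

/-- `s` is an independent set of `G`. -/
def IndepSet (G : SimpleGraph V) (s : Set V) : Prop :=
  ∀ x ∈ s, ∀ y ∈ s, x ≠ y → ¬ G.Adj x y

/-- if `P = p 1, …, p n` is an escape path in `G`, then `flipP`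
(acting elementwise on sets) is an injection from the family of independent sets
of `G` containing `p 1` into the family of independent sets of `G` containing `p n`. -/
theorem flipP_injOn_star [Fintype V] (G : SimpleGraph V)
    (n : ℕ) (p : ℕ → V) (hp : IsEscapePath G n p) :
    Set.MapsTo (fun A : Set V => flipP n p '' A)
        {A : Set V | IndepSet G A ∧ p 1 ∈ A}
        {A : Set V | IndepSet G A ∧ p n ∈ A} ∧
      Set.InjOn (fun A : Set V => flipP n p '' A)
        {A : Set V | IndepSet G A ∧ p 1 ∈ A} := by

  obtain ⟨hn, hinj, hadj, hdeg1, hdeg2⟩ := hp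
  -- computation of flipP on path vertices
  have hflip : ∀ i, 1 ≤ i → i ≤ n → flipP n p (p i) = p (n + 1 - i) := by
    intro i h1 h2
    have hex : ∃ j, 1 ≤ j ∧ j ≤ n ∧ p j = p i := ⟨i, h1, h2, rfl⟩
    simp only [flipP, dif_pos hex]
    have hc := hex.choose_spec
    have he : hex.choose = i :=
      hinj (Set.mem_Icc.mpr ⟨hc.1, hc.2.1⟩) (Set.mem_Icc.mpr ⟨h1, h2⟩) hc.2.2
    rw [he]
  have hflipoff : ∀ x, (∀ j, 1 ≤ j → j ≤ n → p j ≠ x) → flipP n p x = x := by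
    intro x hx
    have hne : ¬ ∃ j, 1 ≤ j ∧ j ≤ n ∧ p j = x := by
      rintro ⟨j, h1, h2, h3⟩; exact hx j h1 h2 h3
    simp only [flipP, dif_neg hne]
  have hinvol : ∀ x, flipP n p (flipP n p x) = x := by
    intro x
    by_cases hx : ∃ j, 1 ≤ j ∧ j ≤ n ∧ p j = x
    · obtain ⟨j, h1, h2, rfl⟩ := hx
      rw [hflip j h1 h2, hflip (n + 1 - j) (by omega) (by omega)]
      congr 1; omega
    · push_neg at hx
      rw [hflipoff x hx, hflipoff x hx]
  -- neighbors of p n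
  have hnbr_n : 2 ≤ n → ∀ y, G.Adj (p n) y → y = p (n - 1) := by
    intro h2 y hy
    have hmem : p (n - 1) ∈ G.neighborFinset (p n) := by
      rw [SimpleGraph.mem_neighborFinset]
      have h := hadj (n - 1) (by omega) (by omega)
      have e : n - 1 + 1 = n := by omega
      rw [e] at h
      exact h.symm
    have hymem : y ∈ G.neighborFinset (p n) := (SimpleGraph.mem_neighborFinset _ _ _).mpr hy
    exact Finset.card_le_one.mp (le_of_eq hdeg1) y hymem _ hmem
  -- neighbors of internal vertices
  have hnbr_mid : ∀ i, 2 ≤ i → i ≤ n - 2 → ∀ y, G.Adj (p i) y →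
      y = p (i - 1) ∨ y = p (i + 1) := by
    intro i hi1 hi2 y hy
    have hne : p (i - 1) ≠ p (i + 1) := by
      intro h
      have := hinj (Set.mem_Icc.mpr ⟨by omega, by omega⟩)
        (Set.mem_Icc.mpr ⟨by omega, by omega⟩) h
      omega
    have hsub : ({p (i - 1), p (i + 1)} : Finset V) ⊆ G.neighborFinset (p i) := by
      intro z hz
      rw [SimpleGraph.mem_neighborFinset]
      rcases Finset.mem_insert.mp hz with h | h
      · subst h
        have h := hadj (i - 1) (by omega) (by omega)
        have e : i - 1 + 1 = i := by omega
        rw [e] at h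
        exact h.symm
      · rw [Finset.mem_singleton] at h
        subst h
        exact hadj i (by omega) (by omega)
    have hcard : (G.neighborFinset (p i)).card ≤ ({p (i - 1), p (i + 1)} : Finset V).card := by
      rw [Finset.card_pair hne]
      have : (G.neighborFinset (p i)).card = G.degree (p i) := rfl
      rw [this, hdeg2 i hi1 hi2]
    have heq := Finset.eq_of_subset_of_card_le hsub hcard
    have hymem : y ∈ G.neighborFinset (p i) := (SimpleGraph.mem_neighborFinset _ _ _).mpr hy
    rw [← heq] at hymem
    rcases Finset.mem_insert.mp hymem with h | h
    · exact Or.inl h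
    · exact Or.inr (Finset.mem_singleton.mp h)
  -- classification of adjacencies among path vertices
  have hadj_class : ∀ a b, 1 ≤ a → a ≤ n → 1 ≤ b → b ≤ n → G.Adj (p a) (p b) →
      (b = a + 1 ∨ a = b + 1) ∨ (a = 1 ∧ b = n - 1) ∨ (a = n - 1 ∧ b = 1) := by
    have hmid_idx : ∀ a b, 2 ≤ a → a ≤ n - 2 → 1 ≤ b → b ≤ n → G.Adj (p a) (p b) →
        a = b + 1 ∨ b = a + 1 := by
      intro a b ha1 ha2 hb1 hb2 hAdj
      rcases hnbr_mid a ha1 ha2 (p b) hAdj with h | h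
      · have := hinj (Set.mem_Icc.mpr ⟨hb1, hb2⟩)
          (Set.mem_Icc.mpr ⟨by omega, by omega⟩) h
        omega
      · have := hinj (Set.mem_Icc.mpr ⟨hb1, hb2⟩)
          (Set.mem_Icc.mpr ⟨by omega, by omega⟩) h
        omega
    intro a b ha1 ha2 hb1 hb2 hAdj
    have hab : a ≠ b := by
      rintro rfl; exact (G.loopless.irrefl _ hAdj)
    by_cases hamid : 2 ≤ a ∧ a ≤ n - 2
    · have := hmid_idx a b hamid.1 hamid.2 hb1 hb2 hAdj
      omega
    by_cases han : a = n
    · rw [han] at hAdj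
      have h2n : 2 ≤ n := by omega
      have hb := hnbr_n h2n (p b) hAdj
      have := hinj (Set.mem_Icc.mpr ⟨hb1, hb2⟩)
        (Set.mem_Icc.mpr ⟨by omega, by omega⟩) hb
      omega
    by_cases hbmid : 2 ≤ b ∧ b ≤ n - 2
    · have := hmid_idx b a hbmid.1 hbmid.2 ha1 ha2 hAdj.symm
      omega
    by_cases hbn : b = n
    · rw [hbn] at hAdj
      have h2n : 2 ≤ n := by omega
      have ha := hnbr_n h2n (p a) hAdj.symm
      have := hinj (Set.mem_Icc.mpr ⟨ha1, ha2⟩)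
        (Set.mem_Icc.mpr ⟨by omega, by omega⟩) ha
      omega
    · push_neg at hamid hbmid
      omega
  -- adjacencies between path and non-path vertices
  have hoff : ∀ a, 1 ≤ a → a ≤ n → ∀ y, (∀ j, 1 ≤ j → j ≤ n → p j ≠ y) →
      G.Adj (p a) y → a = 1 ∨ a = n - 1 := by
    intro a h1 h2 y hy hAdj
    by_cases hamid : 2 ≤ a ∧ a ≤ n - 2
    · rcases hnbr_mid a hamid.1 hamid.2 y hAdj with h | h
      · exact absurd h.symm (hy (a - 1) (by omega) (by omega))
      · exact absurd h.symm (hy (a + 1) (by omega) (by omega))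
    by_cases han : a = n
    · rw [han] at hAdj
      by_cases h2n : 2 ≤ n
      · have := (hnbr_n h2n y hAdj).symm
        exact absurd this (hy (n - 1) (by omega) (by omega))
      · omega
    · push_neg at hamid
      omega
  -- the key independence-preservation lemma
  have key : ∀ A : Set V, IndepSet G A → p 1 ∈ A → ∀ x ∈ A, ∀ y ∈ A,
      (∃ i, 1 ≤ i ∧ i ≤ n ∧ p i = x) → x ≠ y →
      ¬ G.Adj (flipP n p x) (flipP n p y) := by
    intro A hA hp1 x hx y hy hex hxy hAdj
    obtain ⟨i, hi1, hi2, rfl⟩ := hex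
    have hp2 : 2 ≤ n → p 2 ∉ A := by
      intro h2 hmem
      exact hA (p 1) hp1 (p 2) hmem (hadj 1 le_rfl (by omega)).ne
        (hadj 1 le_rfl (by omega))
    rw [hflip i hi1 hi2] at hAdj
    by_cases hyp : ∃ j, 1 ≤ j ∧ j ≤ n ∧ p j = y
    · obtain ⟨j, hj1, hj2, rfl⟩ := hyp
      rw [hflip j hj1 hj2] at hAdj
      rcases hadj_class (n + 1 - i) (n + 1 - j) (by omega) (by omega) (by omega)
          (by omega) hAdj with h | h | h
      · have hadjij : G.Adj (p i) (p j) := by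
          rcases h with h | h
          · have he : i = j + 1 := by omega
            subst he
            exact (hadj j hj1 (by omega)).symm
          · have he : j = i + 1 := by omega
            subst he
            exact hadj i hi1 (by omega)
        exact hA _ hx _ hy hxy hadjij
      · have hj : j = 2 := by omega
        exact hp2 (by omega) (hj ▸ hy)
      · have hi : i = 2 := by omega
        exact hp2 (by omega) (hi ▸ hx)
    · push_neg at hyp
      rw [hflipoff y hyp] at hAdj
      rcases hoff (n + 1 - i) (by omega) (by omega) y hyp hAdj with h | h
      · rw [h] at hAdj
        exact hA _ hp1 _ hy (hyp 1 le_rfl hn) hAdj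
      · have hi : i = 2 := by omega
        exact hp2 (by omega) (hi ▸ hx)
  constructor
  · rintro A ⟨hA, h1⟩
    refine ⟨?_, ?_⟩
    · intro u hu w hw huw
      obtain ⟨x, hx, rfl⟩ := hu
      obtain ⟨y, hy, rfl⟩ := hw
      have hxy : x ≠ y := fun h => huw (by rw [h])
      by_cases hxp : ∃ i, 1 ≤ i ∧ i ≤ n ∧ p i = x
      · exact key A hA h1 x hx y hy hxp hxy
      · by_cases hyp2 : ∃ j, 1 ≤ j ∧ j ≤ n ∧ p j = y
        · intro hAdj
          exact key A hA h1 y hy x hx hyp2 hxy.symm hAdj.symm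
        · push_neg at hxp hyp2
          rw [hflipoff x hxp, hflipoff y hyp2]
          exact hA x hx y hy hxy
    · refine ⟨p 1, h1, ?_⟩
      rw [hflip 1 le_rfl hn, show n + 1 - 1 = n from by omega]
  · intro A _ B _ h
    have hf : Function.Injective (flipP n p) := Function.LeftInverse.injective hinvol
    exact Set.image_injective.mpr hf h
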